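/- Duality-gap bound for the projected gradient descent–ascent iterates (Theorem 2, general form): let Ω_i ⊆ ℝⁿ be nonempty compact convex sets, Ω = ∏_{i∈S} Ω_i, W > 0, and B = [0, W]^{U ⊔ E_as} the box of dual variables with all components in [0, W]. Let α_1, α_2, … > 0 be step sizes and generate (x[k], σ[k]) ∈ Ω × B by x_i[k+1] = Π_{Ω_i}(x_i[k] − α_k ∇_{x_i}Γ(x[k], σ[k])) for each i ∈ S and σ[k+1] = Π_B(σ[k] + α_k ∇_σΓ(x[k], σ[k])), starting from (x[1], σ[1]) ∈ Ω × B. Suppose M₂ > 0 bounds the pseudo-gradient: ‖(∇_x Γ(x,σ), −∇_σΓ(x,σ))‖ ≤ M₂ for all (x,σ) ∈ Ω × B. Then for every (x⋄, σ⋄) ∈ Ω × B and every k ≥ 1, the weighted averages x̂[k] = (Σ_{j=1}^k α_j x[j])/(Σ_{j=1}^k α_j) and σ̂[k] = (Σ_{j=1}^k α_j σ[j])/(Σ_{j=1}^k α_j) satisfy Γ(x̂[k], σ⋄) − Γ(x⋄, σ̂[k]) ≤ (‖(x[1], σ[1]) − (x⋄, σ⋄)‖² + M₂² Σ_{j=1}^k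 α_j²) / (2 Σ_{j=1}^k α_j). -/

import Mathlib

open scoped BigOperators RealInnerProductSpace

set_option maxHeartbeats 4000000 in
/-- Duality-gap bound for the projected gradient descent–ascent
iterates of the conjugate-based SNL algorithm (Theorem 2, general form). -/
theorem stmt_12
    (n : ℕ) (hn : 1 ≤ n)
    (S A : Type) [Fintype S] [DecidableEq S] [Fintype A] [DecidableEq A]
    (a : A → EuclideanSpace ℝ (Fin n))
    (Ess : Finset (S × S))
    (hsym : ∀ i j : S, (i, j) ∈ Ess → (j, i) ∈ Ess)
    (hirr : ∀ i : S, (i, i) ∉ Ess)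
    (U : Finset (S × S)) (hUsub : U ⊆ Ess)
    (hUone : ∀ i j : S, (i, j) ∈ Ess → ((i, j) ∈ U ↔ (j, i) ∉ U))
    (Eas : Finset (S × A))
    (d : S → S → ℝ) (hd : ∀ i j, d i j = d j i)
    (e : S → A → ℝ)
    -- the complementary function
    (Γ : (S → EuclideanSpace ℝ (Fin n)) → (S × S → ℝ) → (S × A → ℝ) → ℝ)
    (hΓ : ∀ x σs σa, Γ x σs σa =
      (∑ p ∈ U, (σs p * (‖x p.1 - x p.2‖ ^ 2 - d p.1 p.2 ^ 2) - σs p ^ 2 / 4))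
        + ∑ q ∈ Eas,
            (σa q * (‖x q.1 - a q.2‖ ^ 2 - e q.1 q.2 ^ 2) - σa q ^ 2 / 4))
    -- the partial gradients of Γ
    (Gx : (S → EuclideanSpace ℝ (Fin n)) → (S × S → ℝ) → (S × A → ℝ) →
      S → EuclideanSpace ℝ (Fin n))
    (hGx : ∀ x σs σa i, Gx x σs σa i =
      (∑ j ∈ Finset.univ.filter (fun j => (i, j) ∈ Ess),
        (2 * (if (i, j) ∈ U then σs (i, j) else σs (j, i))) • (x i - x j))
        + ∑ l ∈ Finset.univ.filter (fun l => (i, l) ∈ Eas),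
            (2 * σa (i, l)) • (x i - a l))
    (Gs : (S → EuclideanSpace ℝ (Fin n)) → (S × S → ℝ) → S × S → ℝ)
    (hGs : ∀ x σs p, Gs x σs p = (‖x p.1 - x p.2‖ ^ 2 - d p.1 p.2 ^ 2) - σs p / 2)
    (Ga : (S → EuclideanSpace ℝ (Fin n)) → (S × A → ℝ) → S × A → ℝ)
    (hGa : ∀ x σa q, Ga x σa q = (‖x q.1 - a q.2‖ ^ 2 - e q.1 q.2 ^ 2) - σa q / 2)
    -- strategy sets and the dual box
    (Ω : S → Set (EuclideanSpace ℝ (Fin n)))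
    (hΩne : ∀ i, (Ω i).Nonempty) (hΩcv : ∀ i, Convex ℝ (Ω i))
    (hΩcp : ∀ i, IsCompact (Ω i))
    (W : ℝ) (hW : 0 < W)
    -- metric projections onto the strategy sets
    (projΩ : S → EuclideanSpace ℝ (Fin n) → EuclideanSpace ℝ (Fin n))
    (hproj : ∀ i u, projΩ i u ∈ Ω i ∧ ∀ w ∈ Ω i, ‖u - projΩ i u‖ ≤ ‖u - w‖)
    -- step sizes and gradient bound
    (α : ℕ → ℝ) (hα : ∀ j, 0 < α j)
    (M₂ : ℝ) (hM₂pos : 0 < M₂)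
    (hM₂ : ∀ (x : S → EuclideanSpace ℝ (Fin n)) (σs : S × S → ℝ) (σa : S × A → ℝ),
      (∀ i, x i ∈ Ω i) → (∀ p ∈ U, σs p ∈ Set.Icc (0 : ℝ) W) →
      (∀ q ∈ Eas, σa q ∈ Set.Icc (0 : ℝ) W) →
      (∑ i : S, ‖Gx x σs σa i‖ ^ 2) + (∑ p ∈ U, Gs x σs p ^ 2)
        + (∑ q ∈ Eas, Ga x σa q ^ 2) ≤ M₂ ^ 2)
    -- the iterates
    (x : ℕ → S → EuclideanSpace ℝ (Fin n))
    (σs : ℕ → S × S → ℝ) (σa : ℕ → S × A → ℝ)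
    (hx1 : ∀ i, x 1 i ∈ Ω i)
    (hσs1 : ∀ p ∈ U, σs 1 p ∈ Set.Icc (0 : ℝ) W)
    (hσa1 : ∀ q ∈ Eas, σa 1 q ∈ Set.Icc (0 : ℝ) W)
    (hxup : ∀ k, 1 ≤ k → ∀ i,
      x (k + 1) i = projΩ i (x k i - α k • Gx (x k) (σs k) (σa k) i))
    (hσsup : ∀ k, 1 ≤ k → ∀ p ∈ U,
      σs (k + 1) p = max 0 (min W (σs k p + α k * Gs (x k) (σs k) p)))
    (hσaup : ∀ k, 1 ≤ k → ∀ q ∈ Eas,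
      σa (k + 1) q = max 0 (min W (σa k q + α k * Ga (x k) (σa k) q))) :
    -- conclusion: duality-gap bound at the weighted averages
    ∀ (xd : S → EuclideanSpace ℝ (Fin n)) (σsd : S × S → ℝ) (σad : S × A → ℝ),
      (∀ i, xd i ∈ Ω i) → (∀ p ∈ U, σsd p ∈ Set.Icc (0 : ℝ) W) →
      (∀ q ∈ Eas, σad q ∈ Set.Icc (0 : ℝ) W) →
      ∀ k, 1 ≤ k →
      Γ (fun i => (∑ j ∈ Finset.Icc 1 k, α j)⁻¹ • ∑ j ∈ Finset.Icc 1 k, α j • x j i)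
          σsd σad
        - Γ xd
            (fun p => (∑ j ∈ Finset.Icc 1 k, α j * σs j p) / ∑ j ∈ Finset.Icc 1 k, α j)
            (fun q => (∑ j ∈ Finset.Icc 1 k, α j * σa j q) / ∑ j ∈ Finset.Icc 1 k, α j)
      ≤ ((∑ i : S, ‖x 1 i - xd i‖ ^ 2) + (∑ p ∈ U, (σs 1 p - σsd p) ^ 2)
          + (∑ q ∈ Eas, (σa 1 q - σad q) ^ 2)
          + M₂ ^ 2 * ∑ j ∈ Finset.Icc 1 k, α j ^ 2)
        / (2 * ∑ j ∈ Finset.Icc 1 k, α j) := by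
  -- ====================== preliminaries ======================
  classical
  intro xd σsd σad hxd hσsd hσad k hk
  -- projection is nonexpansive towards points of the set
  have hnonexp : ∀ (i : S) (u w : EuclideanSpace ℝ (Fin n)), w ∈ Ω i →
      ‖projΩ i u - w‖ ^ 2 ≤ ‖u - w‖ ^ 2 := by
    intro i u w hw
    have hvmem := (hproj i u).1
    have hmin : ∀ z ∈ Ω i, ⟪u - projΩ i u, z - projΩ i u⟫ ≤ 0 := by
      rw [← norm_eq_iInf_iff_real_inner_le_zero (hΩcv i) hvmem]
      haveI : Nonempty (Ω i) := ⟨⟨projΩ i u, hvmem⟩⟩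
      apply le_antisymm
      · refine le_ciInf ?_
        rintro ⟨z, hz⟩
        exact (hproj i u).2 z hz
      · have hb : BddBelow (Set.range fun w : Ω i => ‖u - (w : EuclideanSpace ℝ (Fin n))‖) := by
          refine ⟨0, ?_⟩
          rintro b ⟨z, rfl⟩
          exact norm_nonneg _
        exact ciInf_le hb (⟨projΩ i u, hvmem⟩ : Ω i)
    have key : ‖u - w‖ ^ 2 - ‖projΩ i u - w‖ ^ 2
        = ‖u - projΩ i u‖ ^ 2 - 2 * ⟪u - projΩ i u, w - projΩ i u⟫ := by
      have h1 : u - w = (u - projΩ i u) - (w - projΩ i u) := by abel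
      have h2 : projΩ i u - w = -(w - projΩ i u) := by abel
      rw [h1, h2, norm_sub_sq_real, norm_neg]; ring
    linarith [key, hmin w hw, sq_nonneg ‖u - projΩ i u‖]
  -- clamping to [0, W] is nonexpansive towards points of [0, W]
  have hclamp : ∀ s t : ℝ, 0 ≤ s → s ≤ W → (max 0 (min W t) - s) ^ 2 ≤ (t - s) ^ 2 := by
    intro s t h0 hsW
    rcases le_total t 0 with h | h
    · rw [min_eq_right (h.trans hW.le), max_eq_left h]
      nlinarith
    · rcases le_total W t with h2 | h2
      · rw [min_eq_left h2, max_eq_right hW.le]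
        nlinarith
      · rw [min_eq_right h2, max_eq_right h]
  -- feasibility of the iterates
  have hxmem : ∀ m, 1 ≤ m → ∀ i, x m i ∈ Ω i := by
    intro m hm
    induction m, hm using Nat.le_induction with
    | base => exact hx1
    | succ m hm ih => intro i; rw [hxup m hm i]; exact (hproj i _).1
  have hσsmem : ∀ m, 1 ≤ m → ∀ p ∈ U, σs m p ∈ Set.Icc (0 : ℝ) W := by
    intro m hm
    induction m, hm using Nat.le_induction with
    | base => exact hσs1
    | succ m hm ih =>
      intro p hp; rw [hσsup m hm p hp]
      exact ⟨le_max_left _ _, max_le hW.le (min_le_left _ _)⟩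
  have hσamem : ∀ m, 1 ≤ m → ∀ q ∈ Eas, σa m q ∈ Set.Icc (0 : ℝ) W := by
    intro m hm
    induction m, hm using Nat.le_induction with
    | base => exact hσa1
    | succ m hm ih =>
      intro q hq; rw [hσaup m hm q hq]
      exact ⟨le_max_left _ _, max_le hW.le (min_le_left _ _)⟩
  -- ====================== sum reindexing lemmas ======================
  have hsum_pair : ∀ {β : Type} [Fintype β] [DecidableEq β] (F : Finset (S × β))
      (f : S → β → ℝ),
      ∑ i : S, ∑ l ∈ Finset.univ.filter (fun l => (i, l) ∈ F), f i l
        = ∑ q ∈ F, f q.1 q.2 := by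
    intro β _ _ F f
    calc ∑ i : S, ∑ l ∈ Finset.univ.filter (fun l => (i, l) ∈ F), f i l
        = ∑ i : S, ∑ l : β, if (i, l) ∈ F then f i l else 0 := by
          exact Finset.sum_congr rfl fun i _ => (Finset.sum_filter _ _)
      _ = ∑ q ∈ Finset.univ ×ˢ Finset.univ, if q ∈ F then f q.1 q.2 else 0 :=
          by rw [Finset.sum_product]
      _ = ∑ q ∈ (Finset.univ : Finset (S × β)), if q ∈ F then f q.1 q.2 else 0 := by
          rw [Finset.univ_product_univ]
      _ = ∑ q ∈ Finset.univ ∩ F, f q.1 q.2 := Finset.sum_ite_mem _ _ _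
      _ = ∑ q ∈ F, f q.1 q.2 := by rw [Finset.univ_inter]
  have hEssU : ∀ g : S → S → ℝ,
      ∑ p ∈ Ess, g p.1 p.2 = ∑ p ∈ U, (g p.1 p.2 + g p.2 p.1) := by
    intro g
    have himg : Ess \ U = U.image Prod.swap := by
      ext ⟨i, j⟩
      simp only [Finset.mem_sdiff, Finset.mem_image, Prod.exists, Prod.swap_prod_mk,
        Prod.mk.injEq]
      constructor
      · rintro ⟨hE, hU⟩
        exact ⟨j, i, (hUone j i (hsym i j hE)).mpr hU, rfl, rfl⟩
      · rintro ⟨c, b, hcb, rfl, rfl⟩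
        exact ⟨hsym c b (hUsub hcb), (hUone c b (hUsub hcb)).mp hcb⟩
    have hunion : Ess = U ∪ Ess \ U := (Finset.union_sdiff_of_subset hUsub).symm
    rw [hunion, Finset.sum_union Finset.disjoint_sdiff, himg,
      Finset.sum_image (fun p _ q _ h => Prod.swap_injective h),
      Finset.sum_add_distrib]
    rfl
  -- expansion of the inner product with the primal gradient
  have hinner : ∀ (x' : S → EuclideanSpace ℝ (Fin n)) (σs' : S × S → ℝ)
      (σa' : S × A → ℝ) (z : S → EuclideanSpace ℝ (Fin n)),
      ∑ i : S, ⟪Gx x' σs' σa' i, z i⟫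
        = ∑ p ∈ U, 2 * σs' p * ⟪x' p.1 - x' p.2, z p.1 - z p.2⟫
          + ∑ q ∈ Eas, 2 * σa' q * ⟪x' q.1 - a q.2, z q.1⟫ := by
    intro x' σs' σa' z
    have h1 : ∀ i : S, ⟪Gx x' σs' σa' i, z i⟫
        = (∑ j ∈ Finset.univ.filter (fun j => (i, j) ∈ Ess),
            2 * (if (i, j) ∈ U then σs' (i, j) else σs' (j, i)) * ⟪x' i - x' j, z i⟫)
          + ∑ l ∈ Finset.univ.filter (fun l => (i, l) ∈ Eas),
              2 * σa' (i, l) * ⟪x' i - a l, z i⟫ := by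
      intro i
      rw [hGx, inner_add_left, sum_inner, sum_inner]
      congr 1
      · exact Finset.sum_congr rfl fun j _ => real_inner_smul_left _ _ _
      · exact Finset.sum_congr rfl fun l _ => real_inner_smul_left _ _ _
    calc ∑ i : S, ⟪Gx x' σs' σa' i, z i⟫
        = ∑ i : S, ((∑ j ∈ Finset.univ.filter (fun j => (i, j) ∈ Ess),
              2 * (if (i, j) ∈ U then σs' (i, j) else σs' (j, i)) * ⟪x' i - x' j, z i⟫)
            + ∑ l ∈ Finset.univ.filter (fun l => (i, l) ∈ Eas),
                2 * σa' (i, l) * ⟪x' i - a l, z i⟫) :=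
          Finset.sum_congr rfl fun i _ => h1 i
      _ = (∑ i : S, ∑ j ∈ Finset.univ.filter (fun j => (i, j) ∈ Ess),
              2 * (if (i, j) ∈ U then σs' (i, j) else σs' (j, i)) * ⟪x' i - x' j, z i⟫)
            + ∑ i : S, ∑ l ∈ Finset.univ.filter (fun l => (i, l) ∈ Eas),
                2 * σa' (i, l) * ⟪x' i - a l, z i⟫ := Finset.sum_add_distrib
      _ = (∑ p ∈ Ess, 2 * (if (p.1, p.2) ∈ U then σs' (p.1, p.2) else σs' (p.2, p.1))
              * ⟪x' p.1 - x' p.2, z p.1⟫)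
            + ∑ q ∈ Eas, 2 * σa' (q.1, q.2) * ⟪x' q.1 - a q.2, z q.1⟫ := by
          rw [hsum_pair Ess (fun i j =>
              2 * (if (i, j) ∈ U then σs' (i, j) else σs' (j, i)) * ⟪x' i - x' j, z i⟫),
            hsum_pair Eas (fun i l => 2 * σa' (i, l) * ⟪x' i - a l, z i⟫)]
      _ = ∑ p ∈ U, (2 * (if (p.1, p.2) ∈ U then σs' (p.1, p.2) else σs' (p.2, p.1))
              * ⟪x' p.1 - x' p.2, z p.1⟫
            + 2 * (if (p.2, p.1) ∈ U then σs' (p.2, p.1) else σs' (p.1, p.2))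
              * ⟪x' p.2 - x' p.1, z p.2⟫)
            + ∑ q ∈ Eas, 2 * σa' (q.1, q.2) * ⟪x' q.1 - a q.2, z q.1⟫ := by
          rw [hEssU (fun i j =>
            2 * (if (i, j) ∈ U then σs' (i, j) else σs' (j, i)) * ⟪x' i - x' j, z i⟫)]
      _ = ∑ p ∈ U, 2 * σs' p * ⟪x' p.1 - x' p.2, z p.1 - z p.2⟫
            + ∑ q ∈ Eas, 2 * σa' q * ⟪x' q.1 - a q.2, z q.1⟫ := by
          congr 1
          · refine Finset.sum_congr rfl ?_
            rintro ⟨i, j⟩ hp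
            have hEm : (i, j) ∈ Ess := hUsub hp
            have hnot : (j, i) ∉ U := (hUone i j hEm).mp hp
            rw [if_pos hp, if_neg hnot]
            have hneg : x' j - x' i = -(x' i - x' j) := by abel
            rw [hneg, inner_neg_left, inner_sub_right]
            ring
  -- ====================== convexity in x ======================
  have lemA : ∀ (x' y' : S → EuclideanSpace ℝ (Fin n)) (σs' : S × S → ℝ)
      (σa' : S × A → ℝ), (∀ p ∈ U, 0 ≤ σs' p) → (∀ q ∈ Eas, 0 ≤ σa' q) →
      Γ x' σs' σa' + ∑ i : S, ⟪Gx x' σs' σa' i, y' i - x' i⟫ ≤ Γ y' σs' σa' := by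
    intro x' y' σs' σa' hs hat
    have hin := hinner x' σs' σa' (fun i => y' i - x' i)
    have hU' : ∑ p ∈ U, ((σs' p * (‖x' p.1 - x' p.2‖ ^ 2 - d p.1 p.2 ^ 2) - σs' p ^ 2 / 4)
          + 2 * σs' p * ⟪x' p.1 - x' p.2, (y' p.1 - x' p.1) - (y' p.2 - x' p.2)⟫)
        ≤ ∑ p ∈ U, (σs' p * (‖y' p.1 - y' p.2‖ ^ 2 - d p.1 p.2 ^ 2) - σs' p ^ 2 / 4) := by
      refine Finset.sum_le_sum fun p hp => ?_
      have hy : y' p.1 - y' p.2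
          = (x' p.1 - x' p.2) + ((y' p.1 - x' p.1) - (y' p.2 - x' p.2)) := by abel
      rw [hy, norm_add_sq_real]
      nlinarith [mul_nonneg (hs p hp)
        (sq_nonneg ‖(y' p.1 - x' p.1) - (y' p.2 - x' p.2)‖)]
    have hA' : ∑ q ∈ Eas, ((σa' q * (‖x' q.1 - a q.2‖ ^ 2 - e q.1 q.2 ^ 2) - σa' q ^ 2 / 4)
          + 2 * σa' q * ⟪x' q.1 - a q.2, y' q.1 - x' q.1⟫)
        ≤ ∑ q ∈ Eas, (σa' q * (‖y' q.1 - a q.2‖ ^ 2 - e q.1 q.2 ^ 2) - σa' q ^ 2 / 4) := by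
      refine Finset.sum_le_sum fun q hq => ?_
      have hy : y' q.1 - a q.2 = (x' q.1 - a q.2) + (y' q.1 - x' q.1) := by abel
      rw [hy, norm_add_sq_real]
      nlinarith [mul_nonneg (hat q hq) (sq_nonneg ‖y' q.1 - x' q.1‖)]
    rw [Finset.sum_add_distrib] at hU' hA'
    rw [hΓ x' σs' σa', hΓ y' σs' σa', hin]
    linarith
  -- ====================== concavity in σ ======================
  have lemB : ∀ (x' : S → EuclideanSpace ℝ (Fin n)) (σs1 : S × S → ℝ)
      (σa1 : S × A → ℝ) (σs2 : S × S → ℝ) (σa2 : S × A → ℝ),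
      Γ x' σs2 σa2 ≤ Γ x' σs1 σa1
        + ∑ p ∈ U, Gs x' σs1 p * (σs2 p - σs1 p)
        + ∑ q ∈ Eas, Ga x' σa1 q * (σa2 q - σa1 q) := by
    intro x' σs1 σa1 σs2 σa2
    have h1 : ∑ p ∈ U, (σs2 p * (‖x' p.1 - x' p.2‖ ^ 2 - d p.1 p.2 ^ 2) - σs2 p ^ 2 / 4)
        ≤ ∑ p ∈ U, ((σs1 p * (‖x' p.1 - x' p.2‖ ^ 2 - d p.1 p.2 ^ 2) - σs1 p ^ 2 / 4)
            + Gs x' σs1 p * (σs2 p - σs1 p)) := by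
      refine Finset.sum_le_sum fun p hp => ?_
      rw [hGs]
      nlinarith [sq_nonneg (σs2 p - σs1 p)]
    have h2 : ∑ q ∈ Eas, (σa2 q * (‖x' q.1 - a q.2‖ ^ 2 - e q.1 q.2 ^ 2) - σa2 q ^ 2 / 4)
        ≤ ∑ q ∈ Eas, ((σa1 q * (‖x' q.1 - a q.2‖ ^ 2 - e q.1 q.2 ^ 2) - σa1 q ^ 2 / 4)
            + Ga x' σa1 q * (σa2 q - σa1 q)) := by
      refine Finset.sum_le_sum fun q hq => ?_
      rw [hGa]
      nlinarith [sq_nonneg (σa2 q - σa1 q)]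
    rw [Finset.sum_add_distrib] at h1 h2
    rw [hΓ x' σs1 σa1, hΓ x' σs2 σa2]
    linarith
  -- ====================== one-step descent ======================
  have hstep : ∀ m, 1 ≤ m →
      (∑ i : S, ‖x (m + 1) i - xd i‖ ^ 2) + (∑ p ∈ U, (σs (m + 1) p - σsd p) ^ 2)
          + (∑ q ∈ Eas, (σa (m + 1) q - σad q) ^ 2)
        ≤ (∑ i : S, ‖x m i - xd i‖ ^ 2) + (∑ p ∈ U, (σs m p - σsd p) ^ 2)
            + (∑ q ∈ Eas, (σa m q - σad q) ^ 2)
          - 2 * α m * (Γ (x m) σsd σad - Γ xd (σs m) (σa m)) + M₂ ^ 2 * α m ^ 2 := by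
    intro m hm
    -- primal part
    have hxpart : ∑ i : S, ‖x (m + 1) i - xd i‖ ^ 2
        ≤ ∑ i : S, ‖x m i - xd i‖ ^ 2
          - 2 * α m * ∑ i : S, ⟪Gx (x m) (σs m) (σa m) i, x m i - xd i⟫
          + α m ^ 2 * ∑ i : S, ‖Gx (x m) (σs m) (σa m) i‖ ^ 2 := by
      have hi : ∀ i : S, ‖x (m + 1) i - xd i‖ ^ 2
          ≤ ‖x m i - xd i‖ ^ 2
            - 2 * α m * ⟪Gx (x m) (σs m) (σa m) i, x m i - xd i⟫
            + α m ^ 2 * ‖Gx (x m) (σs m) (σa m) i‖ ^ 2 := by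
        intro i
        have h1 : ‖x (m + 1) i - xd i‖ ^ 2
            ≤ ‖(x m i - α m • Gx (x m) (σs m) (σa m) i) - xd i‖ ^ 2 := by
          rw [hxup m hm i]; exact hnonexp i _ _ (hxd i)
        have h2 : (x m i - α m • Gx (x m) (σs m) (σa m) i) - xd i
            = (x m i - xd i) - α m • Gx (x m) (σs m) (σa m) i := by abel
        have h3 : ‖(x m i - xd i) - α m • Gx (x m) (σs m) (σa m) i‖ ^ 2
            = ‖x m i - xd i‖ ^ 2
              - 2 * α m * ⟪Gx (x m) (σs m) (σa m) i, x m i - xd i⟫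
              + α m ^ 2 * ‖Gx (x m) (σs m) (σa m) i‖ ^ 2 := by
          rw [norm_sub_sq_real, real_inner_smul_right, norm_smul,
            Real.norm_eq_abs, mul_pow, sq_abs, real_inner_comm (x m i - xd i)]
          ring
        rw [h2, h3] at h1
        linarith
      calc ∑ i : S, ‖x (m + 1) i - xd i‖ ^ 2
          ≤ ∑ i : S, (‖x m i - xd i‖ ^ 2
              - 2 * α m * ⟪Gx (x m) (σs m) (σa m) i, x m i - xd i⟫
              + α m ^ 2 * ‖Gx (x m) (σs m) (σa m) i‖ ^ 2) :=
            Finset.sum_le_sum fun i _ => hi i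
        _ = _ := by
            rw [Finset.sum_add_distrib, Finset.sum_sub_distrib,
              ← Finset.mul_sum, ← Finset.mul_sum]
    -- dual parts
    have hspart : ∑ p ∈ U, (σs (m + 1) p - σsd p) ^ 2
        ≤ ∑ p ∈ U, (σs m p - σsd p) ^ 2
          + 2 * α m * ∑ p ∈ U, Gs (x m) (σs m) p * (σs m p - σsd p)
          + α m ^ 2 * ∑ p ∈ U, Gs (x m) (σs m) p ^ 2 := by
      have hp' : ∀ p ∈ U, (σs (m + 1) p - σsd p) ^ 2
          ≤ (σs m p - σsd p) ^ 2
            + 2 * α m * (Gs (x m) (σs m) p * (σs m p - σsd p))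
            + α m ^ 2 * Gs (x m) (σs m) p ^ 2 := by
        intro p hp
        have h1 : (σs (m + 1) p - σsd p) ^ 2
            ≤ (σs m p + α m * Gs (x m) (σs m) p - σsd p) ^ 2 := by
          rw [hσsup m hm p hp]
          exact hclamp _ _ (hσsd p hp).1 (hσsd p hp).2
        nlinarith [h1]
      calc ∑ p ∈ U, (σs (m + 1) p - σsd p) ^ 2
          ≤ ∑ p ∈ U, ((σs m p - σsd p) ^ 2
              + 2 * α m * (Gs (x m) (σs m) p * (σs m p - σsd p))
              + α m ^ 2 * Gs (x m) (σs m) p ^ 2) := Finset.sum_le_sum hp'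
        _ = _ := by
            rw [Finset.sum_add_distrib, Finset.sum_add_distrib,
              ← Finset.mul_sum, ← Finset.mul_sum]
    have hapart : ∑ q ∈ Eas, (σa (m + 1) q - σad q) ^ 2
        ≤ ∑ q ∈ Eas, (σa m q - σad q) ^ 2
          + 2 * α m * ∑ q ∈ Eas, Ga (x m) (σa m) q * (σa m q - σad q)
          + α m ^ 2 * ∑ q ∈ Eas, Ga (x m) (σa m) q ^ 2 := by
      have hq' : ∀ q ∈ Eas, (σa (m + 1) q - σad q) ^ 2
          ≤ (σa m q - σad q) ^ 2
            + 2 * α m * (Ga (x m) (σa m) q * (σa m q - σad q))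
            + α m ^ 2 * Ga (x m) (σa m) q ^ 2 := by
        intro q hq
        have h1 : (σa (m + 1) q - σad q) ^ 2
            ≤ (σa m q + α m * Ga (x m) (σa m) q - σad q) ^ 2 := by
          rw [hσaup m hm q hq]
          exact hclamp _ _ (hσad q hq).1 (hσad q hq).2
        nlinarith [h1]
      calc ∑ q ∈ Eas, (σa (m + 1) q - σad q) ^ 2
          ≤ ∑ q ∈ Eas, ((σa m q - σad q) ^ 2
              + 2 * α m * (Ga (x m) (σa m) q * (σa m q - σad q))
              + α m ^ 2 * Ga (x m) (σa m) q ^ 2) := Finset.sum_le_sum hq'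
        _ = _ := by
            rw [Finset.sum_add_distrib, Finset.sum_add_distrib,
              ← Finset.mul_sum, ← Finset.mul_sum]
    -- gradient bound
    have hM := hM₂ (x m) (σs m) (σa m) (hxmem m hm) (hσsmem m hm) (hσamem m hm)
    have hM' : α m ^ 2 * ((∑ i : S, ‖Gx (x m) (σs m) (σa m) i‖ ^ 2)
          + (∑ p ∈ U, Gs (x m) (σs m) p ^ 2) + (∑ q ∈ Eas, Ga (x m) (σa m) q ^ 2))
        ≤ α m ^ 2 * M₂ ^ 2 := mul_le_mul_of_nonneg_left hM (sq_nonneg _)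
    -- saddle inequality at step m
    have hbig : Γ (x m) σsd σad - Γ xd (σs m) (σa m)
        ≤ (∑ i : S, ⟪Gx (x m) (σs m) (σa m) i, x m i - xd i⟫)
          - (∑ p ∈ U, Gs (x m) (σs m) p * (σs m p - σsd p))
          - ∑ q ∈ Eas, Ga (x m) (σa m) q * (σa m q - σad q) := by
      have hA1 := lemA (x m) xd (σs m) (σa m)
        (fun p hp => (hσsmem m hm p hp).1) (fun q hq => (hσamem m hm q hq).1)
      have hA2 : ∑ i : S, ⟪Gx (x m) (σs m) (σa m) i, xd i - x m i⟫
          = - ∑ i : S, ⟪Gx (x m) (σs m) (σa m) i, x m i - xd i⟫ := by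
        rw [← Finset.sum_neg_distrib]
        refine Finset.sum_congr rfl fun i _ => ?_
        rw [← inner_neg_right, neg_sub]
      have hB1 := lemB (x m) (σs m) (σa m) σsd σad
      have hB2 : ∑ p ∈ U, Gs (x m) (σs m) p * (σsd p - σs m p)
          = - ∑ p ∈ U, Gs (x m) (σs m) p * (σs m p - σsd p) := by
        rw [← Finset.sum_neg_distrib]
        exact Finset.sum_congr rfl fun p _ => by ring
      have hB3 : ∑ q ∈ Eas, Ga (x m) (σa m) q * (σad q - σa m q)
          = - ∑ q ∈ Eas, Ga (x m) (σa m) q * (σa m q - σad q) := by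
        rw [← Finset.sum_neg_distrib]
        exact Finset.sum_congr rfl fun q _ => by ring
      rw [hA2] at hA1
      rw [hB2, hB3] at hB1
      linarith
    have h5 : 2 * α m * (Γ (x m) σsd σad - Γ xd (σs m) (σa m))
        ≤ 2 * α m * ((∑ i : S, ⟪Gx (x m) (σs m) (σa m) i, x m i - xd i⟫)
          - (∑ p ∈ U, Gs (x m) (σs m) p * (σs m p - σsd p))
          - ∑ q ∈ Eas, Ga (x m) (σa m) q * (σa m q - σad q)) :=
      mul_le_mul_of_nonneg_left hbig (by linarith [hα m])
    linarith [hxpart, hspart, hapart, h5, hM']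
  -- ====================== telescoping ======================
  have htel : ∀ m, 1 ≤ m →
      (∑ i : S, ‖x (m + 1) i - xd i‖ ^ 2) + (∑ p ∈ U, (σs (m + 1) p - σsd p) ^ 2)
          + (∑ q ∈ Eas, (σa (m + 1) q - σad q) ^ 2)
        ≤ ((∑ i : S, ‖x 1 i - xd i‖ ^ 2) + (∑ p ∈ U, (σs 1 p - σsd p) ^ 2)
            + (∑ q ∈ Eas, (σa 1 q - σad q) ^ 2))
          - 2 * ∑ j ∈ Finset.Icc 1 m, α j * (Γ (x j) σsd σad - Γ xd (σs j) (σa j))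
          + M₂ ^ 2 * ∑ j ∈ Finset.Icc 1 m, α j ^ 2 := by
    intro m hm
    induction m, hm using Nat.le_induction with
    | base =>
      rw [Finset.Icc_self, Finset.sum_singleton, Finset.sum_singleton]
      linarith [hstep 1 le_rfl]
    | succ m hm ih =>
      rw [Finset.sum_Icc_succ_top (by omega : 1 ≤ m + 1),
        Finset.sum_Icc_succ_top (by omega : 1 ≤ m + 1)]
      linarith [hstep (m + 1) (by omega : 1 ≤ m + 1)]
  have hmain : 2 * ∑ j ∈ Finset.Icc 1 k, α j * (Γ (x j) σsd σad - Γ xd (σs j) (σa j))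
      ≤ ((∑ i : S, ‖x 1 i - xd i‖ ^ 2) + (∑ p ∈ U, (σs 1 p - σsd p) ^ 2)
          + (∑ q ∈ Eas, (σa 1 q - σad q) ^ 2))
        + M₂ ^ 2 * ∑ j ∈ Finset.Icc 1 k, α j ^ 2 := by
    have h1 := htel k hk
    have h2 : (0 : ℝ) ≤ ∑ i : S, ‖x (k + 1) i - xd i‖ ^ 2 :=
      Finset.sum_nonneg fun i _ => sq_nonneg _
    have h3 : (0 : ℝ) ≤ ∑ p ∈ U, (σs (k + 1) p - σsd p) ^ 2 :=
      Finset.sum_nonneg fun p _ => sq_nonneg _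
    have h4 : (0 : ℝ) ≤ ∑ q ∈ Eas, (σa (k + 1) q - σad q) ^ 2 :=
      Finset.sum_nonneg fun q _ => sq_nonneg _
    linarith
  -- ====================== averaging (Jensen) ======================
  set T : ℝ := ∑ j ∈ Finset.Icc 1 k, α j with hT
  have hT0 : 0 < T :=
    Finset.sum_pos (fun j _ => hα j) (Finset.nonempty_Icc.mpr hk)
  set xh : S → EuclideanSpace ℝ (Fin n) :=
    fun i => T⁻¹ • ∑ j ∈ Finset.Icc 1 k, α j • x j i with hxh
  set σsh : S × S → ℝ :=
    fun p => (∑ j ∈ Finset.Icc 1 k, α j * σs j p) / T with hσsh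
  set σah : S × A → ℝ :=
    fun q => (∑ j ∈ Finset.Icc 1 k, α j * σa j q) / T with hσah
  have hxhi : ∀ i, T • xh i = ∑ j ∈ Finset.Icc 1 k, α j • x j i := by
    intro i
    rw [hxh]
    exact smul_inv_smul₀ hT0.ne' _
  have hkey0 : ∀ i : S, ∑ j ∈ Finset.Icc 1 k, α j • (x j i - xh i) = 0 := by
    intro i
    calc ∑ j ∈ Finset.Icc 1 k, α j • (x j i - xh i)
        = ∑ j ∈ Finset.Icc 1 k, (α j • x j i - α j • xh i) :=
          Finset.sum_congr rfl fun j _ => smul_sub _ _ _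
      _ = (∑ j ∈ Finset.Icc 1 k, α j • x j i) - ∑ j ∈ Finset.Icc 1 k, α j • xh i :=
          Finset.sum_sub_distrib _ _
      _ = (∑ j ∈ Finset.Icc 1 k, α j • x j i) - T • xh i := by
          rw [← Finset.sum_smul, ← hT]
      _ = 0 := by rw [hxhi i, sub_self]
  have hJx : T * Γ xh σsd σad ≤ ∑ j ∈ Finset.Icc 1 k, α j * Γ (x j) σsd σad := by
    have h1 : ∀ j ∈ Finset.Icc 1 k,
        α j * (Γ xh σsd σad + ∑ i : S, ⟪Gx xh σsd σad i, x j i - xh i⟫)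
          ≤ α j * Γ (x j) σsd σad := fun j _ =>
      mul_le_mul_of_nonneg_left
        (lemA xh (x j) σsd σad (fun p hp => (hσsd p hp).1) (fun q hq => (hσad q hq).1))
        (hα j).le
    have h2 := Finset.sum_le_sum h1
    have h3 : ∑ j ∈ Finset.Icc 1 k,
        α j * (Γ xh σsd σad + ∑ i : S, ⟪Gx xh σsd σad i, x j i - xh i⟫)
          = T * Γ xh σsd σad
            + ∑ i : S, ⟪Gx xh σsd σad i, ∑ j ∈ Finset.Icc 1 k, α j • (x j i - xh i)⟫ := by
      calc ∑ j ∈ Finset.Icc 1 k,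
            α j * (Γ xh σsd σad + ∑ i : S, ⟪Gx xh σsd σad i, x j i - xh i⟫)
          = ∑ j ∈ Finset.Icc 1 k, (α j * Γ xh σsd σad
              + α j * ∑ i : S, ⟪Gx xh σsd σad i, x j i - xh i⟫) :=
            Finset.sum_congr rfl fun j _ => by ring
        _ = (∑ j ∈ Finset.Icc 1 k, α j * Γ xh σsd σad)
              + ∑ j ∈ Finset.Icc 1 k, α j * ∑ i : S, ⟪Gx xh σsd σad i, x j i - xh i⟫ :=
            Finset.sum_add_distrib
        _ = T * Γ xh σsd σad
              + ∑ j ∈ Finset.Icc 1 k, α j * ∑ i : S, ⟪Gx xh σsd σad i, x j i - xh i⟫ := by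
            rw [← Finset.sum_mul, ← hT]
        _ = T * Γ xh σsd σad
              + ∑ i : S, ⟪Gx xh σsd σad i, ∑ j ∈ Finset.Icc 1 k, α j • (x j i - xh i)⟫ := by
            congr 1
            calc ∑ j ∈ Finset.Icc 1 k, α j * ∑ i : S, ⟪Gx xh σsd σad i, x j i - xh i⟫
                = ∑ j ∈ Finset.Icc 1 k, ∑ i : S, α j * ⟪Gx xh σsd σad i, x j i - xh i⟫ :=
                  Finset.sum_congr rfl fun j _ => Finset.mul_sum _ _ _
              _ = ∑ i : S, ∑ j ∈ Finset.Icc 1 k, α j * ⟪Gx xh σsd σad i, x j i - xh i⟫ :=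
                  Finset.sum_comm
              _ = ∑ i : S, ⟪Gx xh σsd σad i, ∑ j ∈ Finset.Icc 1 k, α j • (x j i - xh i)⟫ := by
                  refine Finset.sum_congr rfl fun i _ => ?_
                  rw [inner_sum]
                  exact Finset.sum_congr rfl fun j _ => (real_inner_smul_right _ _ _).symm
    have h4 : ∑ i : S, ⟪Gx xh σsd σad i, ∑ j ∈ Finset.Icc 1 k, α j • (x j i - xh i)⟫ = 0 :=
      Finset.sum_eq_zero fun i _ => by rw [hkey0 i, inner_zero_right]
    rw [h3, h4] at h2
    linarith
  have hkey1 : ∀ p : S × S, ∑ j ∈ Finset.Icc 1 k, α j * (σs j p - σsh p) = 0 := by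
    intro p
    have hv : T * σsh p = ∑ j ∈ Finset.Icc 1 k, α j * σs j p := by
      show T * ((∑ j ∈ Finset.Icc 1 k, α j * σs j p) / T) = _
      field_simp
    calc ∑ j ∈ Finset.Icc 1 k, α j * (σs j p - σsh p)
        = ∑ j ∈ Finset.Icc 1 k, (α j * σs j p - α j * σsh p) :=
          Finset.sum_congr rfl fun j _ => by ring
      _ = (∑ j ∈ Finset.Icc 1 k, α j * σs j p) - ∑ j ∈ Finset.Icc 1 k, α j * σsh p :=
          Finset.sum_sub_distrib _ _
      _ = (∑ j ∈ Finset.Icc 1 k, α j * σs j p) - T * σsh p := by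
          rw [← Finset.sum_mul, ← hT]
      _ = 0 := by rw [hv, sub_self]
  have hkey2 : ∀ q : S × A, ∑ j ∈ Finset.Icc 1 k, α j * (σa j q - σah q) = 0 := by
    intro q
    have hv : T * σah q = ∑ j ∈ Finset.Icc 1 k, α j * σa j q := by
      show T * ((∑ j ∈ Finset.Icc 1 k, α j * σa j q) / T) = _
      field_simp
    calc ∑ j ∈ Finset.Icc 1 k, α j * (σa j q - σah q)
        = ∑ j ∈ Finset.Icc 1 k, (α j * σa j q - α j * σah q) :=
          Finset.sum_congr rfl fun j _ => by ring
      _ = (∑ j ∈ Finset.Icc 1 k, α j * σa j q) - ∑ j ∈ Finset.Icc 1 k, α j * σah q :=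
          Finset.sum_sub_distrib _ _
      _ = (∑ j ∈ Finset.Icc 1 k, α j * σa j q) - T * σah q := by
          rw [← Finset.sum_mul, ← hT]
      _ = 0 := by rw [hv, sub_self]
  have hJσ : ∑ j ∈ Finset.Icc 1 k, α j * Γ xd (σs j) (σa j) ≤ T * Γ xd σsh σah := by
    have h1 : ∀ j ∈ Finset.Icc 1 k, α j * Γ xd (σs j) (σa j)
        ≤ α j * (Γ xd σsh σah + ∑ p ∈ U, Gs xd σsh p * (σs j p - σsh p)
            + ∑ q ∈ Eas, Ga xd σah q * (σa j q - σah q)) := fun j _ =>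
      mul_le_mul_of_nonneg_left (lemB xd σsh σah (σs j) (σa j)) (hα j).le
    have h2 := Finset.sum_le_sum h1
    have hswap : ∀ (F : Finset (S × S)) (c : S × S → ℝ) (ev : ℕ → S × S → ℝ),
        (∀ p, ∑ j ∈ Finset.Icc 1 k, α j * ev j p = 0) →
        ∑ j ∈ Finset.Icc 1 k, α j * ∑ p ∈ F, c p * ev j p = 0 := by
      intro F c ev hz
      calc ∑ j ∈ Finset.Icc 1 k, α j * ∑ p ∈ F, c p * ev j p
          = ∑ j ∈ Finset.Icc 1 k, ∑ p ∈ F, c p * (α j * ev j p) := by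
            refine Finset.sum_congr rfl fun j _ => ?_
            rw [Finset.mul_sum]
            exact Finset.sum_congr rfl fun p _ => by ring
        _ = ∑ p ∈ F, ∑ j ∈ Finset.Icc 1 k, c p * (α j * ev j p) := Finset.sum_comm
        _ = ∑ p ∈ F, c p * ∑ j ∈ Finset.Icc 1 k, α j * ev j p :=
            Finset.sum_congr rfl fun p _ => (Finset.mul_sum _ _ _).symm
        _ = 0 := Finset.sum_eq_zero fun p _ => by rw [hz p, mul_zero]
    have hswap2 : ∀ (F : Finset (S × A)) (c : S × A → ℝ) (ev : ℕ → S × A → ℝ),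
        (∀ q, ∑ j ∈ Finset.Icc 1 k, α j * ev j q = 0) →
        ∑ j ∈ Finset.Icc 1 k, α j * ∑ q ∈ F, c q * ev j q = 0 := by
      intro F c ev hz
      calc ∑ j ∈ Finset.Icc 1 k, α j * ∑ q ∈ F, c q * ev j q
          = ∑ j ∈ Finset.Icc 1 k, ∑ q ∈ F, c q * (α j * ev j q) := by
            refine Finset.sum_congr rfl fun j _ => ?_
            rw [Finset.mul_sum]
            exact Finset.sum_congr rfl fun q _ => by ring
        _ = ∑ q ∈ F, ∑ j ∈ Finset.Icc 1 k, c q * (α j * ev j q) := Finset.sum_comm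
        _ = ∑ q ∈ F, c q * ∑ j ∈ Finset.Icc 1 k, α j * ev j q :=
            Finset.sum_congr rfl fun q _ => (Finset.mul_sum _ _ _).symm
        _ = 0 := Finset.sum_eq_zero fun q _ => by rw [hz q, mul_zero]
    have h3 : ∑ j ∈ Finset.Icc 1 k,
        α j * (Γ xd σsh σah + ∑ p ∈ U, Gs xd σsh p * (σs j p - σsh p)
            + ∑ q ∈ Eas, Ga xd σah q * (σa j q - σah q))
        = T * Γ xd σsh σah := by
      calc ∑ j ∈ Finset.Icc 1 k,
            α j * (Γ xd σsh σah + ∑ p ∈ U, Gs xd σsh p * (σs j p - σsh p)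
              + ∑ q ∈ Eas, Ga xd σah q * (σa j q - σah q))
          = ∑ j ∈ Finset.Icc 1 k, (α j * Γ xd σsh σah
              + α j * ∑ p ∈ U, Gs xd σsh p * (σs j p - σsh p)
              + α j * ∑ q ∈ Eas, Ga xd σah q * (σa j q - σah q)) :=
            Finset.sum_congr rfl fun j _ => by ring
        _ = (∑ j ∈ Finset.Icc 1 k, (α j * Γ xd σsh σah
              + α j * ∑ p ∈ U, Gs xd σsh p * (σs j p - σsh p)))
              + ∑ j ∈ Finset.Icc 1 k, α j * ∑ q ∈ Eas, Ga xd σah q * (σa j q - σah q) :=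
            Finset.sum_add_distrib
        _ = ((∑ j ∈ Finset.Icc 1 k, α j * Γ xd σsh σah)
              + ∑ j ∈ Finset.Icc 1 k, α j * ∑ p ∈ U, Gs xd σsh p * (σs j p - σsh p))
              + ∑ j ∈ Finset.Icc 1 k, α j * ∑ q ∈ Eas, Ga xd σah q * (σa j q - σah q) := by
            rw [Finset.sum_add_distrib]
        _ = T * Γ xd σsh σah := by
            rw [hswap U (fun p => Gs xd σsh p) (fun j p => σs j p - σsh p) hkey1,
              hswap2 Eas (fun q => Ga xd σah q) (fun j q => σa j q - σah q) hkey2,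
              ← Finset.sum_mul, ← hT, add_zero, add_zero]
    rw [h3] at h2
    exact h2
  have hgap : T * (Γ xh σsd σad - Γ xd σsh σah)
      ≤ ∑ j ∈ Finset.Icc 1 k, α j * (Γ (x j) σsd σad - Γ xd (σs j) (σa j)) := by
    have hsplit : ∑ j ∈ Finset.Icc 1 k, α j * (Γ (x j) σsd σad - Γ xd (σs j) (σa j))
        = (∑ j ∈ Finset.Icc 1 k, α j * Γ (x j) σsd σad)
          - ∑ j ∈ Finset.Icc 1 k, α j * Γ xd (σs j) (σa j) := by
      rw [← Finset.sum_sub_distrib]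
      exact Finset.sum_congr rfl fun j _ => by ring
    rw [hsplit, mul_sub]
    linarith
  rw [le_div_iff₀ (by positivity : (0:ℝ) < 2 * T)]
  nlinarith [hgap, hmain]
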